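/- Let D be a simple strongly connected digraph that is not a directed cycle, let (u,v) be an arc of D, let w be a new vertex not in D, and let D^w be the digraph with vertex set V(D) ∪ {w} and arc set E(D) − {(u,v)} + {(u,w),(w,v)} (the subdivision of the arc (u,v)). Then q(D) ≥ q(D^w). -/

import Mathlib

open Matrix

namespace SignlessDigraph

variable {n : ℕ}

/-- Real adjacency matrix of a (multi)digraph on `Fin n`, given by arc multiplicities. -/
def adjMat (W : Fin n → Fin n → ℕ) : Matrix (Fin n) (Fin n) ℝ :=
  fun i j => (W i j : ℝ)

/-- Outdegree of a vertex. -/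
def outdeg (W : Fin n → Fin n → ℕ) (i : Fin n) : ℕ := ∑ j, W i j

/-- Indegree of a vertex. -/
def indeg (W : Fin n → Fin n → ℕ) (i : Fin n) : ℕ := ∑ j, W j i

/-- The signless Laplacian matrix `Q(D) = diag(outdegrees) + A(D)`. -/
noncomputable def Qmat (W : Fin n → Fin n → ℕ) : Matrix (Fin n) (Fin n) ℝ :=
  Matrix.diagonal (fun i => (outdeg W i : ℝ)) + adjMat W

/-- Spectral radius of a real matrix: the maximum modulus of its (complex) eigenvalues. -/
noncomputable def radius (M : Matrix (Fin n) (Fin n) ℝ) : ℝ :=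
  sSup {r : ℝ | ∃ μ ∈ spectrum ℂ (M.map ((↑) : ℝ → ℂ)), r = ‖μ‖}

/-- The signless Laplacian spectral radius `q(D)`. -/
noncomputable def q (W : Fin n → Fin n → ℕ) : ℝ := radius (Qmat W)

/-- The (adjacency) spectral radius `ρ(D)`. -/
noncomputable def rho (W : Fin n → Fin n → ℕ) : ℝ := radius (adjMat W)

/-- A digraph is simple: no loops and no multiple arcs. -/
def Simple (W : Fin n → Fin n → ℕ) : Prop :=
  (∀ i, W i i = 0) ∧ ∀ i j, W i j ≤ 1

/-- Strong connectivity: every vertex is reachable from every vertex by a directed path. -/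
def StronglyConnected (W : Fin n → Fin n → ℕ) : Prop :=
  ∀ i j : Fin n, Relation.ReflTransGen (fun a b => W a b ≠ 0) i j

/-- Isomorphism of digraphs on `Fin n`. -/
def Iso (W W' : Fin n → Fin n → ℕ) : Prop :=
  ∃ e : Fin n ≃ Fin n, ∀ i j, W (e i) (e j) = W' i j

/-- The clique number: maximum size of a set of vertices with all arcs in both directions. -/
noncomputable def cliqueNum (W : Fin n → Fin n → ℕ) : ℕ :=
  sSup {d : ℕ | ∃ s : Finset (Fin n), s.card = d ∧ ∀ i ∈ s, ∀ j ∈ s, i ≠ j → W i j ≠ 0}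

/-- `W` has a directed cycle of length `c`. -/
def HasCycleLen (W : Fin n → Fin n → ℕ) (c : ℕ) : Prop :=
  ∃ (hc : 2 ≤ c) (p : Fin c → Fin n), Function.Injective p ∧
    ∀ i : Fin c, W (p i) (p ⟨((i : ℕ) + 1) % c, Nat.mod_lt _ (by omega)⟩) ≠ 0

/-- The girth: length of a shortest directed cycle. -/
noncomputable def girth (W : Fin n → Fin n → ℕ) : ℕ := sInf {c | HasCycleLen W c}

/-- The complete digraph `K_n^↔`. -/
def Kcomp (n : ℕ) : Fin n → Fin n → ℕ := fun i j => if i = j then 0 else 1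

/-- The directed cycle `C_n^→`, with arcs `i → i+1 (mod n)`. -/
def cyc (n : ℕ) : Fin n → Fin n → ℕ := fun i j => if (j : ℕ) = ((i : ℕ) + 1) % n then 1 else 0

/-- The digraph `B_{n,d}` (for `2 ≤ d ≤ n-1`): a complete digraph on the vertices
`0, …, d-1` together with a directed path `0 → d → d+1 → ⋯ → n-1 → 1`
(the path `u_1 u_2 ⋯ u_{n-d+2}` with `u_1 = 0`, `u_{n-d+2} = 1`,
and internal vertices `d, …, n-1`). -/
def B (n d : ℕ) : Fin n → Fin n → ℕ := fun i j =>
  if i ≠ j ∧ (i : ℕ) < d ∧ (j : ℕ) < d then 1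
  else if (i : ℕ) = 0 ∧ (j : ℕ) = d then 1
  else if d ≤ (i : ℕ) ∧ (j : ℕ) = (i : ℕ) + 1 then 1
  else if (i : ℕ) = n - 1 ∧ (j : ℕ) = 1 then 1
  else 0

/-- `B'_{n,d} = B_{n,d} − (u_{n-d+1}, u_{n-d+2}) + (u_{n-d+1}, u_1)`, i.e. the arc
`n-1 → 1` is replaced by the arc `n-1 → 0`. -/
def B' (n d : ℕ) : Fin n → Fin n → ℕ := fun i j =>
  if (i : ℕ) = n - 1 ∧ (j : ℕ) = 1 then 0
  else if (i : ℕ) = n - 1 ∧ (j : ℕ) = 0 then 1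
  else B n d i j

/-- The digraph `C_{n,g}` (for `2 ≤ g ≤ n-1`): vertices `u_1, …, u_n` are `0, …, n-1`,
with arcs `i → i+1` for `0 ≤ i ≤ n-2` together with the arcs `g-1 → 0` and `n-1 → 0`. -/
def Cng (n g : ℕ) : Fin n → Fin n → ℕ := fun i j =>
  if (j : ℕ) = (i : ℕ) + 1 then 1
  else if ((i : ℕ) = g - 1 ∨ (i : ℕ) = n - 1) ∧ (j : ℕ) = 0 then 1
  else 0

/-- `C'_{n,g} = C_{n,g} − (u_n, u_1) + (u_n, u_g)`, i.e. the arc `n-1 → 0` is replaced by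
the arc `n-1 → g-1`. -/
def Cng' (n g : ℕ) : Fin n → Fin n → ℕ := fun i j =>
  if (i : ℕ) = n - 1 ∧ (j : ℕ) = 0 then 0
  else if (i : ℕ) = n - 1 ∧ (j : ℕ) = g - 1 then 1
  else Cng n g i j

/-- The θ-digraph `θ(a,b,c)` realized on `Fin n` (intended for `n = a + b + c + 2`):
vertex `0` is the common initial vertex of the paths `P_{a+2}`, `P_{b+2}` and terminal
vertex of `P_{c+2}`; vertex `1` is the common terminal vertex of `P_{a+2}`, `P_{b+2}`
and initial vertex of `P_{c+2}`; the internal vertices of the three paths are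
`2, …, a+1`, `a+2, …, a+b+1` and `a+b+2, …, a+b+c+1` respectively. -/
def theta (n a b c : ℕ) : Fin n → Fin n → ℕ := fun i j =>
  if ((a = 0 ∧ (i : ℕ) = 0 ∧ (j : ℕ) = 1) ∨
      (a ≠ 0 ∧ (((i : ℕ) = 0 ∧ (j : ℕ) = 2) ∨
        (2 ≤ (i : ℕ) ∧ (i : ℕ) ≤ a ∧ (j : ℕ) = (i : ℕ) + 1) ∨
        ((i : ℕ) = a + 1 ∧ (j : ℕ) = 1))) ∨
      (b = 0 ∧ (i : ℕ) = 0 ∧ (j : ℕ) = 1) ∨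
      (b ≠ 0 ∧ (((i : ℕ) = 0 ∧ (j : ℕ) = a + 2) ∨
        (a + 2 ≤ (i : ℕ) ∧ (i : ℕ) ≤ a + b ∧ (j : ℕ) = (i : ℕ) + 1) ∨
        ((i : ℕ) = a + b + 1 ∧ (j : ℕ) = 1))) ∨
      (c = 0 ∧ (i : ℕ) = 1 ∧ (j : ℕ) = 0) ∨
      (c ≠ 0 ∧ (((i : ℕ) = 1 ∧ (j : ℕ) = a + b + 2) ∨
        (a + b + 2 ≤ (i : ℕ) ∧ (i : ℕ) ≤ a + b + c ∧ (j : ℕ) = (i : ℕ) + 1) ∨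
        ((i : ℕ) = a + b + c + 1 ∧ (j : ℕ) = 0))))
  then 1 else 0

/-- The digraph `K→(n,k,m)`: the vertex set is partitioned into
`V₁ = {0,…,m-1}`, `S = {m,…,m+k-1}`, `V₂ = {m+k,…,n-1}`; it is the complete digraph
with all arcs from `V₂` to `V₁` removed. -/
def Kdir (n k m : ℕ) : Fin n → Fin n → ℕ := fun i j =>
  if i = j then 0
  else if m + k ≤ (i : ℕ) ∧ (j : ℕ) < m then 0
  else 1

/-- The digraph `D_{uv}` obtained from `D` by deleting the arc `(u,v)`, identifying `u`
with `v` (the merged vertex is `v`; the vertex `u` becomes isolated) and deleting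
multiple arcs (and loops). -/
def contract (W : Fin n → Fin n → ℕ) (u v : Fin n) : Fin n → Fin n → ℕ :=
  fun i j =>
    if i = u ∨ j = u ∨ i = j then 0
    else if i = v then min 1 (W v j + W u j)
    else if j = v then min 1 (W i v + W i u)
    else min 1 (W i j)

/-- The digraph `D^w` obtained from `D` by subdividing the arc `(u,v)` with a new
vertex `w` (realized as the last vertex of `Fin (n+1)`). -/
def subdivide (W : Fin n → Fin n → ℕ) (u v : Fin n) : Fin (n + 1) → Fin (n + 1) → ℕ :=
  fun i j =>
    if hi : (i : ℕ) < n then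
      if hj : (j : ℕ) < n then
        if (⟨(i : ℕ), hi⟩ : Fin n) = u ∧ (⟨(j : ℕ), hj⟩ : Fin n) = v then 0
        else W ⟨(i : ℕ), hi⟩ ⟨(j : ℕ), hj⟩
      else if (⟨(i : ℕ), hi⟩ : Fin n) = u then 1 else 0
    else
      if hj : (j : ℕ) < n then (if (⟨(j : ℕ), hj⟩ : Fin n) = v then 1 else 0)
      else 0



/-! ### Auxiliary spectral lemmas -/

section Aux

open scoped ENNReal NNReal

attribute [local instance] Matrix.linftyOpNormedRing Matrix.linftyOpNormedAlgebra

lemma ofReal_norm_eq_coe_nnnorm {E : Type*} [SeminormedAddCommGroup E] (a : E) :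
    ENNReal.ofReal ‖a‖ = (‖a‖₊ : ℝ≥0∞) := ENNReal.ofReal_eq_coe_nnreal _

noncomputable local instance {N : ℕ} : CompleteSpace (Matrix (Fin N) (Fin N) ℂ) :=
  FiniteDimensional.complete ℂ _

lemma pow_entry_nonneg {N : ℕ} {A : Matrix (Fin N) (Fin N) ℝ} (hA : ∀ i j, 0 ≤ A i j) :
    ∀ k, ∀ i j, 0 ≤ (A ^ k) i j := by
  intro k
  induction k with
  | zero =>
    intro i j
    rw [pow_zero, Matrix.one_apply]
    split <;> norm_num
  | succ k ih =>
    intro i j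
    rw [pow_succ, Matrix.mul_apply]
    exact Finset.sum_nonneg fun l _ => mul_nonneg (ih i l) (hA l j)

lemma map_pow' {N : ℕ} (A : Matrix (Fin N) (Fin N) ℝ) (k : ℕ) :
    (A.map ((↑) : ℝ → ℂ)) ^ k = (A ^ k).map ((↑) : ℝ → ℂ) := by
  have hco : ∀ (B : Matrix (Fin N) (Fin N) ℝ),
      B.map ((↑) : ℝ → ℂ) = B.map (Complex.ofRealHom : ℝ →+* ℂ) := fun B => rfl
  induction k with
  | zero =>
    simp only [pow_zero, hco]
    exact (Matrix.map_one _ (map_zero _) (map_one _)).symm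
  | succ k ih =>
    rw [pow_succ, pow_succ, ih, hco, hco, hco, ← Matrix.map_mul]

/-- Each row sum of a nonnegative matrix is at most the `L∞`-operator norm of its
complexification. -/
lemma rowsum_le_norm {N : ℕ} (B : Matrix (Fin N) (Fin N) ℝ) (hB : ∀ i j, 0 ≤ B i j)
    (i : Fin N) : (B *ᵥ (fun _ => (1 : ℝ))) i ≤ ‖B.map ((↑) : ℝ → ℂ)‖ := by
  rw [Matrix.linfty_opNorm_def]
  have h1 : (∑ j, ‖(B.map ((↑) : ℝ → ℂ)) i j‖₊)
      ≤ (Finset.univ : Finset (Fin N)).sup fun i => ∑ j, ‖(B.map ((↑) : ℝ → ℂ)) i j‖₊ :=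
    Finset.le_sup (f := fun i => ∑ j, ‖(B.map ((↑) : ℝ → ℂ)) i j‖₊) (Finset.mem_univ i)
  have h2 : (B *ᵥ (fun _ => (1 : ℝ))) i = ((∑ j, ‖(B.map ((↑) : ℝ → ℂ)) i j‖₊ : ℝ≥0) : ℝ) := by
    push_cast
    simp only [Matrix.mulVec, dotProduct, mul_one, Matrix.map_apply, coe_nnnorm,
      Complex.norm_real, Real.norm_eq_abs]
    exact Finset.sum_congr rfl fun j _ => (abs_of_nonneg (hB i j)).symm
  rw [h2]
  exact_mod_cast h1

/-- There is an eigenvalue whose modulus equals `radius A`, and it also realizes the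
`spectralRadius`. -/
lemma exists_radius_mem {N : ℕ} [NeZero N] (A : Matrix (Fin N) (Fin N) ℝ) :
    ∃ μ ∈ spectrum ℂ (A.map ((↑) : ℝ → ℂ)), ‖μ‖ = radius A ∧
      (‖μ‖₊ : ℝ≥0∞) = spectralRadius ℂ (A.map ((↑) : ℝ → ℂ)) := by
  have hne : (spectrum ℂ (A.map ((↑) : ℝ → ℂ))).Nonempty := spectrum.nonempty _
  obtain ⟨μ, hμ, hrad⟩ := spectrum.exists_nnnorm_eq_spectralRadius_of_nonempty hne
  refine ⟨μ, hμ, ?_, hrad⟩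
  have hub : ∀ r ∈ {r : ℝ | ∃ ν ∈ spectrum ℂ (A.map ((↑) : ℝ → ℂ)), r = ‖ν‖},
      r ≤ ‖μ‖ := by
    rintro r ⟨ν, hν, rfl⟩
    have h1 : (‖ν‖₊ : ℝ≥0∞) ≤ spectralRadius ℂ (A.map ((↑) : ℝ → ℂ)) :=
      le_iSup₂ (f := fun k (_ : k ∈ spectrum ℂ (A.map ((↑) : ℝ → ℂ))) => (‖k‖₊ : ℝ≥0∞)) ν hν
    rw [← hrad] at h1
    have h2 : ‖ν‖₊ ≤ ‖μ‖₊ := by exact_mod_cast h1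
    have h3 : ‖ν‖ ≤ ‖μ‖ := h2
    simpa using h3
  refine le_antisymm ?_ ?_
  · exact le_csSup ⟨‖μ‖, hub⟩ ⟨μ, hμ, rfl⟩
  · exact Real.sSup_le hub (norm_nonneg μ)

/-- Lower bound on the spectral radius from uniform lower bounds on row sums of powers. -/
lemma le_radius_of {N : ℕ} [NeZero N] {A : Matrix (Fin N) (Fin N) ℝ} (hA : ∀ i j, 0 ≤ A i j)
    {r : ℝ} (hr : 0 ≤ r) (h : ∀ k : ℕ, ∀ i, r ^ k ≤ ((A ^ k) *ᵥ (fun _ => (1 : ℝ))) i) :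
    r ≤ radius A := by
  obtain ⟨μ, hμ, habs, hrad⟩ := exists_radius_mem A
  set i0 : Fin N := ⟨0, Nat.pos_of_ne_zero (NeZero.ne N)⟩
  have hlim := spectrum.pow_nnnorm_pow_one_div_tendsto_nhds_spectralRadius
    (A.map ((↑) : ℝ → ℂ))
  have hr' : ENNReal.ofReal r ≤ spectralRadius ℂ (A.map ((↑) : ℝ → ℂ)) := by
    refine ge_of_tendsto hlim ?_
    filter_upwards [Filter.eventually_ge_atTop 1] with k hk
    have h1 : r ^ k ≤ ‖(A.map ((↑) : ℝ → ℂ)) ^ k‖ := by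
      rw [map_pow']
      exact le_trans (h k i0) (rowsum_le_norm _ (pow_entry_nonneg hA k) i0)
    have h2 : ENNReal.ofReal (r ^ k) ≤ (‖(A.map ((↑) : ℝ → ℂ)) ^ k‖₊ : ℝ≥0∞) := by
      rw [← ofReal_norm_eq_coe_nnnorm]
      exact ENNReal.ofReal_le_ofReal h1
    have h3 : (ENNReal.ofReal r) ^ k ≤ (‖(A.map ((↑) : ℝ → ℂ)) ^ k‖₊ : ℝ≥0∞) := by
      rwa [ENNReal.ofReal_pow hr] at h2
    have hk0 : (k : ℝ) ≠ 0 := by positivity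
    calc ENNReal.ofReal r
        = ((ENNReal.ofReal r) ^ k) ^ (1 / (k : ℝ)) := by
          rw [← ENNReal.rpow_natCast _ k, ← ENNReal.rpow_mul,
            mul_one_div_cancel hk0, ENNReal.rpow_one]
      _ ≤ (‖(A.map ((↑) : ℝ → ℂ)) ^ k‖₊ : ℝ≥0∞) ^ (1 / (k : ℝ)) :=
          ENNReal.rpow_le_rpow h3 (by positivity)
  rw [← hrad, ← ofReal_norm_eq_coe_nnnorm] at hr'
  have := (ENNReal.ofReal_le_ofReal_iff (norm_nonneg μ)).mp hr'
  rw [habs] at this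
  exact this

/-- If `s` exceeds the spectral radius, some power of `A` has all row sums at most `s ^ k`. -/
lemma exists_pow_rowsum_le {N : ℕ} [NeZero N] {A : Matrix (Fin N) (Fin N) ℝ}
    (hA : ∀ i j, 0 ≤ A i j) {s : ℝ} (hs : radius A < s) :
    ∃ k, 1 ≤ k ∧ ∀ i, ((A ^ k) *ᵥ (fun _ => (1 : ℝ))) i ≤ s ^ k := by
  obtain ⟨μ, hμ, habs, hrad⟩ := exists_radius_mem A
  have h0 : (0 : ℝ) ≤ radius A := habs ▸ norm_nonneg μ
  have hs0 : 0 < s := lt_of_le_of_lt h0 hs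
  have hlt : spectralRadius ℂ (A.map ((↑) : ℝ → ℂ)) < ENNReal.ofReal s := by
    rw [← hrad, ← ofReal_norm_eq_coe_nnnorm]
    exact ENNReal.ofReal_lt_ofReal_iff_of_nonneg (norm_nonneg μ) |>.mpr
      (by rw [habs]; exact hs)
  have hlim := spectrum.pow_nnnorm_pow_one_div_tendsto_nhds_spectralRadius
    (A.map ((↑) : ℝ → ℂ))
  have hev := hlim.eventually_lt_const hlt
  obtain ⟨k, hklt, hk1⟩ := (hev.and (Filter.eventually_ge_atTop 1)).exists
  refine ⟨k, hk1, fun i => ?_⟩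
  have hk0 : (k : ℝ) ≠ 0 := by positivity
  have h3 : (‖(A.map ((↑) : ℝ → ℂ)) ^ k‖₊ : ℝ≥0∞) ≤ (ENNReal.ofReal s) ^ k := by
    have h4 : ((‖(A.map ((↑) : ℝ → ℂ)) ^ k‖₊ : ℝ≥0∞) ^ (1 / (k : ℝ))) ^ (k : ℝ)
        ≤ (ENNReal.ofReal s) ^ (k : ℝ) := ENNReal.rpow_le_rpow hklt.le (by positivity)
    rwa [← ENNReal.rpow_mul, one_div_mul_cancel hk0, ENNReal.rpow_one,
      ENNReal.rpow_natCast] at h4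
  rw [← ENNReal.ofReal_pow hs0.le, ← ofReal_norm_eq_coe_nnnorm] at h3
  have h5 : ‖(A.map ((↑) : ℝ → ℂ)) ^ k‖ ≤ s ^ k :=
    (ENNReal.ofReal_le_ofReal_iff (by positivity)).mp h3
  rw [map_pow'] at h5
  exact le_trans (rowsum_le_norm _ (pow_entry_nonneg hA k) i) h5

/-- Collatz–Wielandt style upper bound: if `A ≥ 0` entrywise and `A y ≤ s y` for a positive
vector `y`, then every complex eigenvalue of `A` has modulus at most `s`. -/
lemma eig_abs_le {N : ℕ} {A : Matrix (Fin N) (Fin N) ℝ} (hA : ∀ i j, 0 ≤ A i j)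
    {y : Fin N → ℝ} (hy : ∀ i, 0 < y i) {s : ℝ}
    (h : ∀ i, (A *ᵥ y) i ≤ s * y i) {μ : ℂ}
    (hμ : μ ∈ spectrum ℂ (A.map ((↑) : ℝ → ℂ))) : ‖μ‖ ≤ s := by
  rw [spectrum.mem_iff, Matrix.isUnit_iff_isUnit_det, isUnit_iff_ne_zero, not_not] at hμ
  obtain ⟨x, hx0, hx⟩ := (Matrix.exists_mulVec_eq_zero_iff).mpr hμ
  have hxe : (A.map ((↑) : ℝ → ℂ)) *ᵥ x = μ • x := by
    rw [Matrix.sub_mulVec] at hx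
    have h1 : (algebraMap ℂ (Matrix (Fin N) (Fin N) ℂ) μ) *ᵥ x = μ • x := by
      rw [Algebra.algebraMap_eq_smul_one, Matrix.smul_mulVec, Matrix.one_mulVec]
    rw [h1] at hx
    exact (sub_eq_zero.mp hx).symm
  obtain ⟨i0, hi0⟩ : ∃ i, x i ≠ 0 := Function.ne_iff.mp hx0
  obtain ⟨i, -, hi⟩ := Finset.exists_max_image Finset.univ
    (fun j => ‖x j‖ / y j) ⟨i0, Finset.mem_univ i0⟩
  set c : ℝ := ‖x i‖ / y i with hc
  have hcpos : 0 < c :=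
    lt_of_lt_of_le (div_pos (by simpa using hi0) (hy i0)) (hi i0 (Finset.mem_univ i0))
  have hxc : ∀ j, ‖x j‖ ≤ c * y j := fun j =>
    (div_le_iff₀ (hy j)).mp (hi j (Finset.mem_univ j))
  have hxi : ‖x i‖ = c * y i := by
    rw [hc, div_mul_cancel₀ _ (hy i).ne']
  have hmain : ‖μ‖ * (c * y i) ≤ s * (c * y i) := by
    have e1 : ‖μ‖ * (c * y i) = ‖((A.map ((↑) : ℝ → ℂ)) *ᵥ x) i‖ := by
      rw [hxe, Pi.smul_apply, smul_eq_mul, norm_mul, hxi]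
    calc ‖μ‖ * (c * y i)
        = ‖((A.map ((↑) : ℝ → ℂ)) *ᵥ x) i‖ := e1
      _ = ‖∑ j, ((A i j : ℂ)) * x j‖ := by
          simp [Matrix.mulVec, dotProduct, Matrix.map_apply]
      _ ≤ ∑ j, ‖(A i j : ℂ) * x j‖ := norm_sum_le _ _
      _ = ∑ j, A i j * ‖x j‖ :=
          Finset.sum_congr rfl fun j _ => by
            rw [norm_mul, Complex.norm_real, Real.norm_eq_abs, abs_of_nonneg (hA i j)]
      _ ≤ ∑ j, A i j * (c * y j) :=
          Finset.sum_le_sum fun j _ => mul_le_mul_of_nonneg_left (hxc j) (hA i j)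
      _ = c * ∑ j, A i j * y j := by
          rw [Finset.mul_sum]; exact Finset.sum_congr rfl fun j _ => by ring
      _ = c * ((A *ᵥ y) i) := by simp [Matrix.mulVec, dotProduct]
      _ ≤ c * (s * y i) := mul_le_mul_of_nonneg_left (h i) hcpos.le
      _ = s * (c * y i) := by ring
  exact le_of_mul_le_mul_right hmain (mul_pos hcpos (hy i))

end Aux


section Graph

lemma Qmat_nonneg {N : ℕ} (W : Fin N → Fin N → ℕ) : ∀ i j, 0 ≤ Qmat W i j := by
  intro i j
  simp only [Qmat, Matrix.add_apply, adjMat, Matrix.diagonal_apply]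
  split <;> positivity

lemma Qmat_mulVec {N : ℕ} (W : Fin N → Fin N → ℕ) (y : Fin N → ℝ) (i : Fin N) :
    (Qmat W *ᵥ y) i = (outdeg W i : ℝ) * y i + ∑ j, (W i j : ℝ) * y j := by
  have : (Qmat W *ᵥ y) i = (Matrix.diagonal (fun i => (outdeg W i : ℝ)) *ᵥ y) i
      + (adjMat W *ᵥ y) i := by
    rw [Qmat, Matrix.add_mulVec, Pi.add_apply]
  rw [this, Matrix.mulVec_diagonal]
  simp [Matrix.mulVec, dotProduct, adjMat]

lemma pow_mulVec_one_le {N : ℕ} {A : Matrix (Fin N) (Fin N) ℝ} (hA : ∀ i j, 0 ≤ A i j)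
    {r : ℝ} (hr : 0 ≤ r) (h : ∀ i, r ≤ (A *ᵥ (fun _ => (1:ℝ))) i) :
    ∀ k i, r ^ k ≤ ((A ^ k) *ᵥ (fun _ => (1:ℝ))) i := by
  intro k
  induction k with
  | zero => intro i; simp [Matrix.one_mulVec]
  | succ k ih =>
    intro i
    have hstep : (A ^ (k+1)) *ᵥ (fun _ => (1:ℝ)) = A *ᵥ ((A ^ k) *ᵥ (fun _ => (1:ℝ))) := by
      rw [Matrix.mulVec_mulVec, ← pow_succ']
    rw [hstep]
    calc r ^ (k+1) = r * r ^ k := by ring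
      _ ≤ (A *ᵥ (fun _ => (1:ℝ))) i * r ^ k :=
          mul_le_mul_of_nonneg_right (h i) (pow_nonneg hr k)
      _ = ∑ j, A i j * r ^ k := by
          simp [Matrix.mulVec, dotProduct, Finset.sum_mul]
      _ ≤ ∑ j, A i j * ((A ^ k) *ᵥ (fun _ => (1:ℝ))) j :=
          Finset.sum_le_sum fun j _ => mul_le_mul_of_nonneg_left (ih j) (hA i j)
      _ = (A *ᵥ ((A ^ k) *ᵥ (fun _ => (1:ℝ)))) i := by
          simp [Matrix.mulVec, dotProduct]

end Graph

/-- Subdividing an arc of a strongly connected digraph which is not a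
directed cycle does not increase the signless Laplacian spectral radius:
`q(D) ≥ q(D^w)`. -/
theorem q_subdivide_le {n : ℕ} (W : Fin n → Fin n → ℕ) (hW : Simple W)
    (hsc : StronglyConnected W) (hnc : ¬ Iso W (cyc n)) (u v : Fin n) (huv : W u v ≠ 0) :
    q (subdivide W u v) ≤ q W := by
  classical
  have huv1 : W u v = 1 := le_antisymm (hW.2 u v) (Nat.one_le_iff_ne_zero.mpr huv)
  have hune : u ≠ v := fun h => huv (by rw [← h]; exact hW.1 u)
  have hn2 : 2 ≤ n := by
    have h1 : (u : ℕ) ≠ (v : ℕ) := fun h => hune (Fin.ext h)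
    have := u.isLt
    have := v.isLt
    omega
  haveI : NeZero n := ⟨by omega⟩
  -- every outdegree is at least 1
  have hdeg : ∀ i, 1 ≤ outdeg W i := by
    intro i
    have hj : ∃ j : Fin n, j ≠ i := by
      by_cases hiu : i = u
      · exact ⟨v, by rw [hiu]; exact fun h => hune h.symm⟩
      · exact ⟨u, fun h => hiu h.symm⟩
    obtain ⟨j, hj⟩ := hj
    rcases (hsc i j).cases_head with h | ⟨c, hic, -⟩
    · exact absurd h.symm hj
    · calc 1 ≤ W i c := Nat.one_le_iff_ne_zero.mpr hic
        _ ≤ outdeg W i := Finset.single_le_sum (f := fun j => W i j)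
            (fun _ _ => Nat.zero_le _) (Finset.mem_univ c)
  have hQnn := Qmat_nonneg W
  -- 2 ≤ q W
  have hrow2 : ∀ i, (2:ℝ) ≤ (Qmat W *ᵥ (fun _ => (1:ℝ))) i := by
    intro i
    rw [Qmat_mulVec]
    have h1 : (1:ℝ) ≤ (outdeg W i : ℝ) := by exact_mod_cast hdeg i
    have h2 : ∑ j, (W i j : ℝ) * 1 = (outdeg W i : ℝ) := by
      simp [outdeg]
    rw [mul_one, h2]
    linarith
  have h2q : (2:ℝ) ≤ q W :=
    le_radius_of hQnn (by norm_num) (pow_mulVec_one_le hQnn (by norm_num) hrow2)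
  -- main estimate: q (subdivide W u v) ≤ s for every s > q W
  have key : ∀ s : ℝ, q W < s → q (subdivide W u v) ≤ s := by
    intro s hs
    have hs2 : (2:ℝ) < s := lt_of_le_of_lt h2q hs
    obtain ⟨k, hk1, hkrow⟩ := exists_pow_rowsum_le hQnn hs
    obtain ⟨N, rfl⟩ : ∃ N, k = N + 1 := ⟨k - 1, by omega⟩
    set a : ℕ → Fin n → ℝ := fun t => (Qmat W ^ t) *ᵥ (fun _ => (1:ℝ)) with ha
    have ha0 : ∀ i, a 0 i = 1 := by intro i; simp [ha, Matrix.one_mulVec]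
    have hanneg : ∀ t i, 0 ≤ a t i := by
      intro t i
      simp only [ha, Matrix.mulVec, dotProduct, mul_one]
      exact Finset.sum_nonneg fun j _ => pow_entry_nonneg hQnn t i j
    set y : Fin n → ℝ := ∑ t ∈ Finset.range (N+1), (s ^ (N - t)) • a t with hy
    have hy_apply : ∀ i, y i = ∑ t ∈ Finset.range (N+1), s ^ (N - t) * a t i := by
      intro i
      rw [hy, Finset.sum_apply]
      simp
    have hy1 : ∀ i, 1 ≤ y i := by
      intro i
      rw [hy_apply]
      have h0 : s ^ (N - 0) * a 0 i = s ^ N := by rw [ha0]; simp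
      calc (1:ℝ) ≤ s ^ N := one_le_pow₀ (by linarith)
        _ = s ^ (N - 0) * a 0 i := h0.symm
        _ ≤ ∑ t ∈ Finset.range (N+1), s ^ (N - t) * a t i :=
            Finset.single_le_sum (f := fun t => s ^ (N - t) * a t i)
              (fun t _ => mul_nonneg (by positivity) (hanneg t i))
              (Finset.mem_range.mpr (by omega))
    have hypos : ∀ i, 0 < y i := fun i => lt_of_lt_of_le one_pos (hy1 i)
    -- Q y ≤ s y
    have hQy : ∀ i, (Qmat W *ᵥ y) i ≤ s * y i := by
      intro i
      have h1 : Qmat W *ᵥ y = ∑ t ∈ Finset.range (N+1), (s ^ (N - t)) • (Qmat W *ᵥ a t) := by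
        have h := map_sum ((Qmat W).mulVecLin)
          (fun t => (s ^ (N - t)) • a t) (Finset.range (N+1))
        simp only [Matrix.mulVecLin_apply, LinearMap.map_smul] at h
        rw [hy]
        exact h
      have h2 : ∀ t, Qmat W *ᵥ a t = a (t+1) := by
        intro t
        rw [ha]
        simp only []
        rw [Matrix.mulVec_mulVec, ← pow_succ']
      have hQy_eq : (Qmat W *ᵥ y) i = ∑ t ∈ Finset.range (N+1), s ^ (N - t) * a (t+1) i := by
        rw [h1, Finset.sum_apply]
        exact Finset.sum_congr rfl fun t _ => by rw [h2, Pi.smul_apply, smul_eq_mul]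
      set F : ℕ → ℝ := fun t => s ^ (N + 1 - t) * a t i with hF
      have hQyF : (Qmat W *ᵥ y) i = (∑ t ∈ Finset.range (N+2), F t) - F 0 := by
        rw [hQy_eq]
        have hsucc : ∀ t, s ^ (N - t) * a (t+1) i = F (t+1) := by
          intro t
          show s ^ (N - t) * a (t+1) i = s ^ (N + 1 - (t+1)) * a (t+1) i
          rw [Nat.succ_sub_succ]
        rw [Finset.sum_congr rfl fun t _ => hsucc t, Finset.sum_range_succ' F (N+1)]
        ring
      have hsyF : s * y i = ∑ t ∈ Finset.range (N+1), F t := by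
        rw [hy_apply, Finset.mul_sum]
        refine Finset.sum_congr rfl fun t ht => ?_
        have hts : N + 1 - t = (N - t) + 1 := by
          have := Finset.mem_range.mp ht; omega
        show s * (s ^ (N - t) * a t i) = s ^ (N + 1 - t) * a t i
        rw [hts, pow_succ]
        ring
      have hFN : F (N+1) ≤ s ^ (N+1) := by
        have h := hkrow i
        show s ^ (N + 1 - (N + 1)) * a (N+1) i ≤ s ^ (N+1)
        simpa using h
      have hF0 : F 0 = s ^ (N+1) := by
        show s ^ (N + 1 - 0) * a 0 i = s ^ (N+1)
        rw [ha0]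
        simp
      rw [hQyF, hsyF, Finset.sum_range_succ]
      linarith
    -- structure of the subdivided digraph
    set W' := subdivide W u v with hW'def
    have hcc : ∀ i j : Fin n, W' i.castSucc j.castSucc = if i = u ∧ j = v then 0 else W i j := by
      intro i j
      simp [hW'def, subdivide, i.isLt, j.isLt]
    have hcl : ∀ i : Fin n, W' i.castSucc (Fin.last n) = if i = u then 1 else 0 := by
      intro i
      simp [hW'def, subdivide, i.isLt]
    have hlc : ∀ j : Fin n, W' (Fin.last n) j.castSucc = if j = v then 1 else 0 := by
      intro j
      simp [hW'def, subdivide, j.isLt]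
    have hll : W' (Fin.last n) (Fin.last n) = 0 := by
      simp [hW'def, subdivide]
    have hdeg_c : ∀ i : Fin n, outdeg W' i.castSucc = outdeg W i := by
      intro i
      rw [show outdeg W' i.castSucc = ∑ j : Fin (n+1), W' i.castSucc j from rfl,
        Fin.sum_univ_castSucc]
      simp only [hcc, hcl]
      by_cases hiu : i = u
      · subst hiu
        rw [if_pos rfl]
        have he : ∀ j : Fin n, (if i = i ∧ j = v then 0 else W i j)
            = (if j = v then 0 else W i j) := fun j => by simp
        rw [Finset.sum_congr rfl fun j _ => he j]
        have h1 : (∑ j, if j = v then (0:ℕ) else W i j) + ∑ j, (if j = v then W i j else 0)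
            = ∑ j, W i j := by
          rw [← Finset.sum_add_distrib]
          refine Finset.sum_congr rfl fun j _ => ?_
          split <;> simp
        have h2 : (∑ j, if j = v then W i j else (0:ℕ)) = W i v :=
          (Finset.sum_ite_eq' Finset.univ v (fun j => W i j)).trans
            (if_pos (Finset.mem_univ v))
        rw [h2, huv1] at h1
        exact h1
      · rw [if_neg hiu]
        have he : ∀ j : Fin n, (if i = u ∧ j = v then 0 else W i j) = W i j := fun j => by
          simp [hiu]
        rw [Finset.sum_congr rfl fun j _ => he j, add_zero]
        rfl
    have hdeg_l : outdeg W' (Fin.last n) = 1 := by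
      rw [show outdeg W' (Fin.last n) = ∑ j : Fin (n+1), W' (Fin.last n) j from rfl,
        Fin.sum_univ_castSucc, hll, add_zero]
      simp only [hlc]
      rw [Finset.sum_ite_eq' Finset.univ v (fun _ => 1)]
      simp
    -- the extended vector
    set t : ℝ := y v / (s - 1) with htdef
    have hs1 : (0:ℝ) < s - 1 := by linarith
    have htpos : 0 < t := div_pos (hypos v) hs1
    have htle : t ≤ y v := by
      rw [htdef]
      exact div_le_self (hypos v).le (by linarith)
    have hst : (s - 1) * t = y v := by
      rw [htdef]
      field_simp
    set y' : Fin (n+1) → ℝ := Fin.snoc y t with hy'def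
    have hy'pos : ∀ p, 0 < y' p := by
      intro p
      refine Fin.lastCases ?_ (fun i => ?_) p
      · rw [hy'def, Fin.snoc_last]; exact htpos
      · rw [hy'def, Fin.snoc_castSucc]; exact hypos i
    have hrow' : ∀ p, (Qmat W' *ᵥ y') p ≤ s * y' p := by
      intro p
      rw [Qmat_mulVec, Fin.sum_univ_castSucc]
      refine Fin.lastCases ?_ (fun i => ?_) p
      · rw [hdeg_l, hll]
        simp only [hlc, hy'def, Fin.snoc_castSucc, Fin.snoc_last]
        have hsum : ∑ j : Fin n, ((if j = v then 1 else 0 : ℕ) : ℝ) * y j = y v := by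
          have he : ∀ j : Fin n, ((if j = v then 1 else 0 : ℕ) : ℝ) * y j
              = (if j = v then y j else 0) := fun j => by split <;> simp
          rw [Finset.sum_congr rfl fun j _ => he j]
          exact (Finset.sum_ite_eq' Finset.univ v (fun j => y j)).trans
            (if_pos (Finset.mem_univ v))
        rw [hsum]
        push_cast
        linarith
      · rw [hdeg_c]
        simp only [hcc, hcl, hy'def, Fin.snoc_castSucc, Fin.snoc_last]
        by_cases hiu : i = u
        · subst hiu
          rw [if_pos rfl]
          have he : ∀ j : Fin n, ((if i = i ∧ j = v then 0 else W i j : ℕ) : ℝ) * y j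
              = ((W i j : ℝ) * y j) - (if j = v then (W i j : ℝ) * y j else 0) := by
            intro j
            by_cases hjv : j = v <;> simp [hjv]
          rw [Finset.sum_congr rfl fun j _ => he j, Finset.sum_sub_distrib,
            (Finset.sum_ite_eq' Finset.univ v (fun j => (W i j : ℝ) * y j)).trans
              (if_pos (Finset.mem_univ v))]
          have hQu := hQy i
          rw [Qmat_mulVec] at hQu
          rw [huv1]
          push_cast
          linarith
        · rw [if_neg hiu]
          have he : ∀ j : Fin n, ((if i = u ∧ j = v then 0 else W i j : ℕ) : ℝ)
              = (W i j : ℝ) := fun j => by simp [hiu]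
          rw [Finset.sum_congr rfl fun j _ => by rw [he j]]
          have hQi := hQy i
          rw [Qmat_mulVec] at hQi
          push_cast
          linarith
    -- conclude via the eigenvalue bound
    have hQ'nn := Qmat_nonneg W'
    show radius (Qmat W') ≤ s
    rw [radius]
    refine Real.sSup_le ?_ (by linarith)
    rintro r ⟨μ, hμ, rfl⟩
    exact eig_abs_le hQ'nn hy'pos hrow' hμ
  by_contra hcon
  push_neg at hcon
  have := key ((q W + q (subdivide W u v)) / 2) (by linarith)
  linarith

end SignlessDigraph
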